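/- Let a be a real number with a ≠ 1/2, let n be a natural number, let π be a probability vector on {0,1}^n, and write C = C_a(n). Then Tr( C⁻¹ · diag(Cπ) · (C⁻¹)ᵀ − π πᵀ ) = ((a² + (1−a)²)/(2a−1)²)^n − πᵀπ, where πᵀπ = Σ_x π_x². -/

import Mathlib

open Matrix

/-- `Cmat a b n` is the `2^n × 2^n` real matrix indexed by bit strings `x, y ∈ {0,1}^n`
whose `(x, y)` entry is `a ^ (n - d) * b ^ d`, where `d` is the Hamming distance
between `x` and `y`. -/
def Cmat (a b : ℝ) (n : ℕ) : Matrix (Fin n → Fin 2) (Fin n → Fin 2) ℝ :=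
  Matrix.of fun x y => a ^ (n - hammingDist x y) * b ^ hammingDist x y

/-- `CmatB a n` abbreviates `Cmat a (1 - a) n`. -/
def CmatB (a : ℝ) (n : ℕ) : Matrix (Fin n → Fin 2) (Fin n → Fin 2) ℝ :=
  Cmat a (1 - a) n

lemma Cmat_apply_prod (a b : ℝ) (n : ℕ) (x y : Fin n → Fin 2) :
    Cmat a b n x y = ∏ i, (if x i = y i then a else b) := by
  rw [Finset.prod_ite, Finset.prod_const, Finset.prod_const]
  have h : (Finset.univ.filter fun i => x i = y i).card
      = n - (Finset.univ.filter fun i => ¬ x i = y i).card := by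
    have := Finset.card_filter_add_card_filter_not
      (s := (Finset.univ : Finset (Fin n))) (p := fun i => x i = y i)
    simp only [Finset.card_univ, Fintype.card_fin] at this
    omega
  rw [h]
  rfl

lemma fin2 (u : Fin 2) : u = 0 ∨ u = 1 := by omega

lemma Cmat_mul (a b c d : ℝ) (n : ℕ) :
    Cmat a b n * Cmat c d n = Cmat (a*c + b*d) (a*d + b*c) n := by
  ext x z
  rw [Matrix.mul_apply, Cmat_apply_prod]
  have key := Fintype.prod_sum
    (f := fun (i : Fin n) (u : Fin 2) => (if x i = u then a else b) * (if u = z i then c else d))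
  rw [show (∑ y : Fin n → Fin 2, Cmat a b n x y * Cmat c d n y z)
      = ∑ y : Fin n → Fin 2, ∏ i, ((if x i = y i then a else b) * (if y i = z i then c else d))
    from Finset.sum_congr rfl fun y _ => by
      rw [Cmat_apply_prod, Cmat_apply_prod, ← Finset.prod_mul_distrib]]
  rw [← key]
  refine Finset.prod_congr rfl fun i _ => ?_
  rw [Fin.sum_univ_two]
  rcases fin2 (x i) with h1|h1 <;> rcases fin2 (z i) with h2|h2 <;> simp [h1, h2] <;> ring

lemma Cmat_one (n : ℕ) : Cmat 1 0 n = (1 : Matrix (Fin n → Fin 2) (Fin n → Fin 2) ℝ) := by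
  ext x y
  rw [Cmat_apply_prod, Finset.prod_boole, Matrix.one_apply]
  simp [funext_iff]

lemma sum_Cmat_col (c d : ℝ) (n : ℕ) (y : Fin n → Fin 2) :
    ∑ x, Cmat c d n x y = (c + d) ^ n := by
  simp_rw [Cmat_apply_prod]
  have key := Fintype.prod_sum
    (f := fun (i : Fin n) (u : Fin 2) => (if u = y i then c else d))
  rw [← key]
  rw [Finset.prod_congr rfl (fun i _ => ?_), Finset.prod_const, Finset.card_univ,
    Fintype.card_fin]
  rw [Fin.sum_univ_two]
  rcases fin2 (y i) with h|h <;> simp [h] <;> ring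

lemma Cmat_symm (c d : ℝ) (n : ℕ) : (Cmat c d n)ᵀ = Cmat c d n := by
  ext x y
  simp [Cmat, Matrix.transpose_apply, hammingDist_comm x y]

lemma Cmat_comm (c d : ℝ) (n : ℕ) (x y : Fin n → Fin 2) :
    Cmat c d n x y = Cmat c d n y x := by
  simp [Cmat, hammingDist_comm x y]

lemma Cmat_sq (c d : ℝ) (n : ℕ) (x y : Fin n → Fin 2) :
    Cmat c d n x y * Cmat c d n x y = Cmat (c^2) (d^2) n x y := by
  rw [Cmat_apply_prod, Cmat_apply_prod, ← Finset.prod_mul_distrib]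
  refine Finset.prod_congr rfl fun i _ => ?_
  split_ifs <;> ring

theorem trace_cov_estimator (a : ℝ) (ha : a ≠ 1 / 2) (n : ℕ)
    (π : (Fin n → Fin 2) → ℝ) (hπ : ∀ x, 0 ≤ π x) (hsum : ∑ x, π x = 1) :
    Matrix.trace
        ((CmatB a n)⁻¹ * Matrix.diagonal ((CmatB a n).mulVec π) * ((CmatB a n)⁻¹)ᵀ
          - Matrix.vecMulVec π π)
      = ((a ^ 2 + (1 - a) ^ 2) / (2 * a - 1) ^ 2) ^ n - ∑ x, π x ^ 2 := by
  set D := 2 * a - 1 with hD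
  have hD0 : D ≠ 0 := by
    intro h; apply ha; rw [hD] at h; linarith
  set M := Cmat (a / D) (-(1 - a) / D) n with hM
  have hinv : CmatB a n * M = 1 := by
    rw [CmatB, hM, Cmat_mul]
    have e1 : a * (a / D) + (1 - a) * (-(1 - a) / D) = 1 := by
      rw [hD]; field_simp
      have h' : a * 2 - 1 ≠ 0 := fun h => hD0 (by rw [hD]; linarith)
      rw [div_eq_one_iff_eq h']; ring
    have e2 : a * (-(1 - a) / D) + (1 - a) * (a / D) = 0 := by
      field_simp; ring
    rw [e1, e2, Cmat_one]
  have hMinv : (CmatB a n)⁻¹ = M := Matrix.inv_eq_right_inv hinv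
  set v := (CmatB a n).mulVec π with hv
  have hvsum : ∑ y, v y = 1 := by
    rw [hv]
    simp only [Matrix.mulVec, dotProduct]
    rw [Finset.sum_comm]
    have h1 : ∀ x, ∑ y, CmatB a n y x * π x = π x := by
      intro x
      rw [← Finset.sum_mul]
      have h2 : ∑ y, CmatB a n y x = 1 := by
        rw [CmatB, sum_Cmat_col a (1 - a) n x]
        norm_num
      rw [h2, one_mul]
    simp_rw [h1]
    exact hsum
  have htr1 : Matrix.trace (M * Matrix.diagonal v * Mᵀ)
      = ((a ^ 2 + (1 - a) ^ 2) / D ^ 2) ^ n := by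
    have hMs : Mᵀ = M := Cmat_symm _ _ _
    rw [hMs, Matrix.trace]
    have hdiag : ∀ x : Fin n → Fin 2, (M * Matrix.diagonal v * M).diag x
        = ∑ y, Cmat ((a/D)^2) ((-(1-a)/D)^2) n x y * v y := by
      intro x
      rw [Matrix.diag_apply, Matrix.mul_apply]
      refine Finset.sum_congr rfl fun y _ => ?_
      rw [Matrix.mul_diagonal]
      have hyx : M y x = M x y := by rw [hM]; exact Cmat_comm _ _ _ _ _
      rw [hyx, show M x y * v y * M x y = M x y * M x y * v y by ring, hM, Cmat_sq]
    simp_rw [hdiag]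
    rw [Finset.sum_comm]
    have h3 : ∀ y, ∑ x, Cmat ((a/D)^2) ((-(1-a)/D)^2) n x y * v y
        = ((a ^ 2 + (1 - a) ^ 2) / D ^ 2) ^ n * v y := by
      intro y
      rw [← Finset.sum_mul, sum_Cmat_col]
      congr 2
      field_simp
    simp_rw [h3]
    rw [← Finset.mul_sum, hvsum, mul_one]
  have htr2 : Matrix.trace (Matrix.vecMulVec π π) = ∑ x, π x ^ 2 := by
    rw [Matrix.trace]
    refine Finset.sum_congr rfl fun x _ => ?_
    simp [Matrix.vecMulVec_apply, sq]
  rw [Matrix.trace_sub, hMinv, htr1, htr2]
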